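/- Let X be a nonempty perfect Polish space with a fixed good basis, let (x_p) be a dense sequence of X, and let Y = 2 = {0,1} ⊆ ℝ. Then sup{L(f) : f : X → 2 is recoverable with respect to (x_p)} = ω₁; that is, for every countable ordinal ξ there is a function f : X → 2 recoverable with respect to (x_p) with L(f) > ξ. -/

import Mathlib

open Filter Topology Set Classical

noncomputable section
open scoped Classical

/-- A set is Fσ if it is a countable union of closed sets. -/
def IsFsigma {X : Type*} [TopologicalSpace X] (s : Set X) : Prop :=
  ∃ F : ℕ → Set X, (∀ n, IsClosed (F n)) ∧ s = ⋃ n, F n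

/-- A function is Baire class one if the preimage of every open set is Fσ. -/
def BaireClassOneFn {X Y : Type*} [TopologicalSpace X] [TopologicalSpace Y] (f : X → Y) : Prop :=
  ∀ U : Set Y, IsOpen U → IsFsigma (f ⁻¹' U)

/-- A countable basis `(W m)` is good if for every open `U` and `x ∈ U` there is `m₀`
such that for all `m ≥ m₀`, `x ∈ W m` implies `W m ⊆ U`. -/
def IsGoodBasis {X : Type*} [TopologicalSpace X] (W : ℕ → Set X) : Prop :=
  TopologicalSpace.IsTopologicalBasis (Set.range W) ∧
  ∀ U : Set X, IsOpen U → ∀ x ∈ U, ∃ m₀, ∀ m ≥ m₀, x ∈ W m → W m ⊆ U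

/-- The path to `x` based on the dense sequence `D`, relative to the good basis `W`. -/
noncomputable def pathSeq {X : Type*} (W : ℕ → Set X) (D : ℕ → X) (x : X) : ℕ → X
  | 0 => D 0
  | n + 1 =>
    if x = pathSeq W D x n then pathSeq W D x n
    else D (sInf {p | ∃ m, x ∈ W m ∧ D p ∈ W m ∧ ∀ k, k ≤ n → pathSeq W D x k ∉ W m})
  termination_by n => n
  decreasing_by all_goals omega

/-- `f` is recoverable with respect to `D` (and the good basis `W`). -/
def RecoverableWith {X Y : Type*} [TopologicalSpace Y] (W : ℕ → Set X) (D : ℕ → X)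
    (f : X → Y) : Prop :=
  ∀ x : X, Tendsto (fun n => f (pathSeq W D x n)) atTop (𝓝 (f x))

/-- `(G α)_{α ≤ β}` witnesses the Bourgain separation of the disjoint sets `A` and `B` :
an increasing transfinite sequence of open sets such that successive differences miss `A`
or `B`, continuous at limits, starting at `∅` and ending at `univ`. -/
def IsBourgainSeq {X : Type*} [TopologicalSpace X] (A B : Set X) (β : Ordinal)
    (G : Ordinal → Set X) : Prop :=
  (∀ α ≤ β, IsOpen (G α)) ∧
  (∀ α γ : Ordinal, α ≤ γ → γ ≤ β → G α ⊆ G γ) ∧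
  (∀ α < β, (G (α + 1) \ G α) ∩ A = ∅ ∨ (G (α + 1) \ G α) ∩ B = ∅) ∧
  (∀ γ ≤ β, Order.IsSuccLimit γ → G γ = ⋃ α < γ, G α) ∧
  G 0 = ∅ ∧ G β = Set.univ

/-- Bourgain's rank `L(A,B)` : the least countable length of a Bourgain sequence
separating `A` from `B`. -/
noncomputable def rankL {X : Type*} [TopologicalSpace X] (A B : Set X) : Ordinal :=
  sInf {β : Ordinal | β < (Cardinal.aleph 1).ord ∧ ∃ G : Ordinal → Set X, IsBourgainSeq A B β G}

/-- Bourgain's rank of a real-valued function :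
`L(f) = sup {L({f ≤ q₁}, {f ≥ q₂}) | q₁ < q₂ rationals}`. -/
noncomputable def rankLf {X : Type*} [TopologicalSpace X] (f : X → ℝ) : Ordinal :=
  sSup {o : Ordinal | ∃ q₁ q₂ : ℚ, q₁ < q₂ ∧
    o = rankL {x | f x ≤ (q₁ : ℝ)} {x | (q₂ : ℝ) ≤ f x}}

section Recover

variable {X : Type*} [MetricSpace X] (W : ℕ → Set X) (D : ℕ → X)

/-- the candidate index set at step `n`. -/
def cand (x : X) (n : ℕ) : Set ℕ :=
  {p | ∃ m, x ∈ W m ∧ D p ∈ W m ∧ ∀ k, k ≤ n → pathSeq W D x k ∉ W m}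

lemma pathSeq_succ (x : X) (n : ℕ) :
    pathSeq W D x (n + 1) =
      if x = pathSeq W D x n then pathSeq W D x n
      else D (sInf (cand W D x n)) := by
  rw [pathSeq, cand]

lemma pathSeq_stall {x : X} {n : ℕ} (h : pathSeq W D x n = x) :
    ∀ m, n ≤ m → pathSeq W D x m = x := by
  intro m hm
  induction m with
  | zero => exact (Nat.le_zero.mp hm ▸ h)
  | succ k ih =>
    rcases Nat.lt_or_ge n (k+1) with h1 | h2
    · have hk : pathSeq W D x k = x := ih (Nat.lt_succ_iff.mp h1)
      rw [pathSeq_succ, if_pos hk.symm, hk]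
    · exact Nat.le_antisymm hm h2 ▸ h

lemma pathSeq_ne_before {x : X} {n : ℕ} (h : pathSeq W D x n ≠ x) :
    ∀ k, k ≤ n → pathSeq W D x k ≠ x := fun k hk hc => h (pathSeq_stall W D hc n hk)

lemma exists_basis_avoid (hW : IsGoodBasis W) {x : X} {F : Set X} (hF : F.Finite)
    (hx : x ∉ F) : ∃ m, x ∈ W m ∧ ∀ y ∈ F, y ∉ W m := by
  have hU : IsOpen Fᶜ := hF.isClosed.isOpen_compl
  obtain ⟨v, hv, hxv, hvU⟩ := hW.1.exists_subset_of_mem_open (by exact hx) hU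
  obtain ⟨m, rfl⟩ := hv
  exact ⟨m, hxv, fun y hy hyW => (hvU hyW) hy⟩

lemma cand_nonempty (hW : IsGoodBasis W) (hD : DenseRange D) {x : X} {n : ℕ}
    (h : x ≠ pathSeq W D x n) : (cand W D x n).Nonempty := by
  have hfin : (pathSeq W D x '' {k | k ≤ n}).Finite :=
    (Set.finite_Iic n).image _
  have hx : x ∉ pathSeq W D x '' {k | k ≤ n} := by
    rintro ⟨k, hk, hkx⟩
    exact pathSeq_ne_before W D (fun hc => h hc.symm) k hk hkx
  obtain ⟨m, hxm, hm⟩ := exists_basis_avoid W hW hfin hx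
  have hop : IsOpen (W m) := hW.1.isOpen ⟨m, rfl⟩
  obtain ⟨p, hp⟩ := hD.exists_mem_open hop ⟨x, hxm⟩
  exact ⟨p, m, hxm, hp, fun k hk => hm _ ⟨k, hk, rfl⟩⟩

lemma pathSeq_mem_cand (hW : IsGoodBasis W) (hD : DenseRange D) {x : X} {n : ℕ}
    (h : x ≠ pathSeq W D x n) :
    sInf (cand W D x n) ∈ cand W D x n ∧ pathSeq W D x (n+1) = D (sInf (cand W D x n)) := by
  refine ⟨Nat.sInf_mem (cand_nonempty W D hW hD h), ?_⟩
  rw [pathSeq_succ, if_neg h]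

/-- the first-return path eventually enters any open set around `x`. -/
theorem pathSeq_eventually_mem (hW : IsGoodBasis W) (hD : DenseRange D) (x : X) {U : Set X}
    (hU : IsOpen U) (hx : x ∈ U) : ∀ᶠ n in atTop, pathSeq W D x n ∈ U := by
  obtain ⟨m₀, hm₀⟩ := hW.2 U hU x hx
  set bad : Set ℕ := {n | x ≠ pathSeq W D x n ∧ pathSeq W D x (n+1) ∉ U} with hbad
  have hwit : ∀ n ∈ bad, ∃ m, m < m₀ ∧ x ∈ W m ∧ pathSeq W D x (n+1) ∈ W m ∧
      ∀ k, k ≤ n → pathSeq W D x k ∉ W m := by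
    intro n hn
    obtain ⟨⟨m, hxm, hDm, hall⟩, heq⟩ := pathSeq_mem_cand W D hW hD hn.1
    rw [← heq] at hDm
    refine ⟨m, ?_, hxm, hDm, hall⟩
    by_contra hge
    exact hn.2 (hm₀ m (Nat.le_of_not_lt hge) hxm hDm)
  choose! wit hwlt hwx hws hwa using hwit
  have hinj : Set.InjOn wit bad := by
    intro a ha b hb hab
    by_contra hne
    rcases Nat.lt_or_ge a b with h1 | h1
    · exact hwa b hb (a+1) h1 (hab ▸ hws a ha)
    · exact hwa a ha (b+1) (Nat.lt_of_le_of_ne h1 (Ne.symm hne)) (hab ▸ hws b hb)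
  have hbfin : bad.Finite := by
    apply Set.Finite.of_finite_image _ hinj
    exact (Set.finite_Iio m₀).subset (by rintro _ ⟨n, hn, rfl⟩; exact hwlt n hn)
  obtain ⟨N, hN⟩ := hbfin.bddAbove
  rw [eventually_atTop]
  refine ⟨N + 2, fun n hn => ?_⟩
  obtain ⟨k, rfl⟩ : ∃ k, n = k + 1 := ⟨n - 1, by omega⟩
  have hk : k ∉ bad := fun hkb => by have := hN hkb; omega
  rw [hbad, Set.mem_setOf_eq] at hk
  push_neg at hk
  by_cases hxk : x = pathSeq W D x k
  · rw [pathSeq_succ, if_pos hxk, ← hxk]; exact hx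
  · exact hk hxk

/-- the path eventually stalls at `x` for `x` in the range of `D`. -/
theorem pathSeq_eventually_eq (hW : IsGoodBasis W) (hD : DenseRange D) {x : X}
    (hx : x ∈ range D) : ∀ᶠ n in atTop, pathSeq W D x n = x := by
  obtain ⟨p₀, hp₀⟩ := hx
  suffices h : ∃ n, n ≤ p₀ + 1 ∧ pathSeq W D x n = x by
    obtain ⟨n, _, hn⟩ := h
    rw [eventually_atTop]
    exact ⟨n, fun m hm => pathSeq_stall W D hn m hm⟩
  by_contra hcon
  push_neg at hcon
  have hne : ∀ n, n ≤ p₀ + 1 → pathSeq W D x n ≠ x := hcon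
  have hxne : ∀ n, n ≤ p₀ → x ≠ pathSeq W D x n :=
    fun n hn hc => hne n (by omega) hc.symm
  -- p₀ is a candidate at every step n ≤ p₀
  have hmem : ∀ n, n ≤ p₀ → p₀ ∈ cand W D x n := by
    intro n hn
    have hfin : (pathSeq W D x '' {k | k ≤ n}).Finite := (Set.finite_Iic n).image _
    have hxnotin : x ∉ pathSeq W D x '' {k | k ≤ n} := by
      rintro ⟨k, (hk : k ≤ n), hkx⟩
      exact hne k (by omega) hkx
    obtain ⟨m, hxm, hm⟩ := exists_basis_avoid W hW hfin hxnotin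
    exact ⟨m, hxm, hp₀ ▸ hxm, fun k hk => hm _ ⟨k, hk, rfl⟩⟩
  set q : ℕ → ℕ := fun n => sInf (cand W D x n) with hq
  have hqle : ∀ n, n ≤ p₀ → q n ≤ p₀ := fun n hn => Nat.sInf_le (hmem n hn)
  have hseq : ∀ n, n ≤ p₀ → pathSeq W D x (n+1) = D (q n) :=
    fun n hn => (pathSeq_mem_cand W D hW hD (hxne n hn)).2
  have hqne : ∀ n, n ≤ p₀ → D (q n) ≠ x := by
    intro n hn hc
    exact hne (n+1) (by omega) (by rw [hseq n hn, hc])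
  have hqlt : ∀ n, n ≤ p₀ → q n < p₀ := by
    intro n hn
    rcases Nat.lt_or_ge (q n) p₀ with h1 | h1
    · exact h1
    · exact absurd (Nat.le_antisymm (hqle n hn) h1 ▸ hp₀) (hqne n hn)
  have hp₀pos : 0 < p₀ := by
    rcases Nat.eq_zero_or_pos p₀ with h0 | h1
    · have h00 : pathSeq W D x 0 = D 0 := by rw [pathSeq]
      exact ((hne 0 (by omega)) (by rw [h00, ← h0, hp₀])).elim
    · exact h1
  -- injectivity of q on [0, p₀]
  have hinj : ∀ a b, a ≤ p₀ → b ≤ p₀ → a < b → q a ≠ q b := by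
    intro a b ha hb hab hc
    obtain ⟨⟨m, hxm, hDm, hall⟩, heq⟩ := pathSeq_mem_cand W D hW hD (hxne b hb)
    apply hall (a+1) hab
    rw [hseq a ha, hc]
    exact hDm
  have : Function.Injective (fun n : Fin (p₀+1) => (⟨q n.1, hqlt n.1 (Nat.lt_succ_iff.mp n.2)⟩ : Fin p₀)) := by
    intro a b hab
    simp only [Fin.mk.injEq] at hab
    by_contra hne'
    have hne'' : a.1 ≠ b.1 := fun hc => hne' (Fin.ext hc)
    rcases Nat.lt_or_ge a.1 b.1 with h1 | h1
    · exact hinj a.1 b.1 (Nat.lt_succ_iff.mp a.2) (Nat.lt_succ_iff.mp b.2) h1 hab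
    · exact hinj b.1 a.1 (Nat.lt_succ_iff.mp b.2) (Nat.lt_succ_iff.mp a.2)
        (Nat.lt_of_le_of_ne h1 (Ne.symm hne'')) hab.symm
  have hcard := Fintype.card_le_of_injective _ this
  simp [Fintype.card_fin] at hcard

theorem recoverableWith_indicator (hW : IsGoodBasis W) (hD : DenseRange D) {S : Set X}
    (hcl : closure S ⊆ range D) :
    RecoverableWith W D (fun y => if y ∈ S then (1:ℝ) else 0) := by
  intro x
  set f : X → ℝ := fun y => if y ∈ S then (1:ℝ) else 0 with hf
  by_cases hx : x ∈ range D
  · have h := pathSeq_eventually_eq W D hW hD hx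
    have he : (fun _ : ℕ => f x) =ᶠ[atTop] fun n => f (pathSeq W D x n) :=
      h.mono fun n hn => by show f x = f (pathSeq W D x n); rw [hn]
    exact Tendsto.congr' he tendsto_const_nhds
  · have hxS : x ∉ closure S := fun h => hx (hcl h)
    have hxS' : x ∉ S := fun h => hxS (subset_closure h)
    have h := pathSeq_eventually_mem W D hW hD x (isClosed_closure (s := S)).isOpen_compl hxS
    have he : (fun _ : ℕ => f x) =ᶠ[atTop] fun n => f (pathSeq W D x n) := by
      refine h.mono fun n hn => ?_
      have h1 : f (pathSeq W D x n) = 0 :=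
        if_neg (fun hc : pathSeq W D x n ∈ S => hn (subset_closure hc))
      have h2 : f x = 0 := if_neg hxS'
      show f x = f (pathSeq W D x n)
      rw [h1, h2]
    exact Tendsto.congr' he tendsto_const_nhds

end Recover

section LowerBound

variable {X : Type*} [TopologicalSpace X]

def dOp (S F : Set X) : Set X := F ∩ closure (F ∩ S) ∩ closure (F ∩ Sᶜ)

lemma dOp_mono (S : Set X) {F F' : Set X} (h : F ⊆ F') : dOp S F ⊆ dOp S F' :=
  inter_subset_inter (inter_subset_inter h
    (closure_mono (inter_subset_inter h subset_rfl)))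
    (closure_mono (inter_subset_inter h subset_rfl))

noncomputable def dIter (S : Set X) : Ordinal → Set X
  | α => ⋂ γ : Ordinal, ⋂ (_ : γ < α), dOp S (dIter S γ)
  termination_by α => α

lemma dIter_eq (S : Set X) (α : Ordinal) :
    dIter S α = ⋂ γ : Ordinal, ⋂ (_ : γ < α), dOp S (dIter S γ) := by
  rw [dIter]

lemma dIter_subset_dOp (S : Set X) {γ α : Ordinal} (h : γ < α) :
    dIter S α ⊆ dOp S (dIter S γ) := by
  rw [dIter_eq]
  exact fun x hx => by
    simp only [Set.mem_iInter] at hx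
    exact hx γ h

lemma dIter_anti (S : Set X) {γ α : Ordinal} (h : γ ≤ α) : dIter S α ⊆ dIter S γ := by
  intro x hx
  rw [dIter_eq]
  simp only [Set.mem_iInter]
  intro γ' hγ'
  exact dIter_subset_dOp S (lt_of_lt_of_le hγ' h) hx

lemma mem_dIter_zero (S : Set X) (x : X) : x ∈ dIter S 0 := by
  rw [dIter_eq]
  simp only [Set.mem_iInter]
  intro γ hγ
  exact absurd hγ not_lt_zero

theorem dIter_subset_compl_bourgain {S : Set X} {β : Ordinal} {G : Ordinal → Set X}
    (hG : IsBourgainSeq Sᶜ S β G) : ∀ α ≤ β, dIter S α ⊆ (G α)ᶜ := by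
  intro α
  induction α using Ordinal.induction with
  | h α IH =>
    intro hαβ x hx hxG
    rcases Ordinal.zero_or_succ_or_isSuccLimit α with h0 | ⟨γ, hγ⟩ | hlim
    · rw [h0, hG.2.2.2.2.1] at hxG
      exact hxG
    · rw [← Ordinal.add_one_eq_succ] at hγ
      subst hγ
      have hlt : γ < γ + 1 := by
        rw [Ordinal.add_one_eq_succ]; exact Order.lt_succ γ
      have hγβ : γ ≤ β := le_of_lt (lt_of_lt_of_le hlt hαβ)
      have hγltβ : γ < β := by
        rw [Ordinal.add_one_eq_succ, Order.succ_le_iff] at hαβ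
        exact hαβ
      obtain ⟨⟨hxF, hxc1⟩, hxc2⟩ := dIter_subset_dOp S hlt hx
      have hop : IsOpen (G (γ + 1)) := hG.1 _ hαβ
      obtain ⟨y, hyG, hyF, hyS⟩ := (mem_closure_iff.mp hxc1) (G (γ + 1)) hop hxG
      obtain ⟨z, hzG, hzF, hzS⟩ := (mem_closure_iff.mp hxc2) (G (γ + 1)) hop hxG
      have hyc : y ∉ G γ := IH γ hlt hγβ hyF
      have hzc : z ∉ G γ := IH γ hlt hγβ hzF
      rcases hG.2.2.1 γ hγltβ with hstep | hstep
      · exact absurd hstep (Set.Nonempty.ne_empty ⟨z, ⟨⟨hzG, hzc⟩, hzS⟩⟩)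
      · exact absurd hstep (Set.Nonempty.ne_empty ⟨y, ⟨⟨hyG, hyc⟩, hyS⟩⟩)
    · have hGl := hG.2.2.2.1 α hαβ hlim
      rw [hGl] at hxG
      simp only [Set.mem_iUnion] at hxG
      obtain ⟨γ, hγα, hxγ⟩ := hxG
      exact IH γ hγα (le_of_lt (lt_of_lt_of_le hγα hαβ)) (dIter_anti S (le_of_lt hγα) hx) hxγ

end LowerBound

section UpperBound

variable {X : Type*} [MetricSpace X]

/-- isolated points of `Uᶜ` lying in `S`. -/
def isoPts (S U : Set X) : Set X :=
  {x | x ∈ S ∧ x ∉ U ∧ ∃ r > 0, Metric.ball x r ∩ Uᶜ ⊆ {x}}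

def isoRad (U : Set X) (x : X) : ℝ :=
  if h : ∃ r > 0, Metric.ball x r ∩ Uᶜ ⊆ {x} then h.choose else 1

lemma isoRad_spec {U : Set X} {x : X} (h : ∃ r > 0, Metric.ball x r ∩ Uᶜ ⊆ {x}) :
    0 < isoRad U x ∧ Metric.ball x (isoRad U x) ∩ Uᶜ ⊆ {x} := by
  rw [isoRad, dif_pos h]
  exact ⟨h.choose_spec.1, h.choose_spec.2⟩

def stepA (S U : Set X) : Set X := U ∪ (closure (S \ U))ᶜ

def stepB (S U : Set X) : Set X :=
  U ∪ ⋃ x ∈ isoPts S U, Metric.ball x (isoRad U x)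

def bstep (S U : Set X) : Set X :=
  if (closure (S \ U))ᶜ ⊆ U then stepB S U else stepA S U

lemma subset_bstep (S U : Set X) : U ⊆ bstep S U := by
  rw [bstep]; split <;> exact Set.subset_union_left

lemma bstep_isOpen {S U : Set X} (hU : IsOpen U) : IsOpen (bstep S U) := by
  rw [bstep]
  split
  · exact hU.union (isOpen_iUnion fun x => isOpen_iUnion fun _ => Metric.isOpen_ball)
  · exact hU.union isClosed_closure.isOpen_compl

lemma bstep_step (S U : Set X) :
    (bstep S U \ U) ∩ Sᶜ = ∅ ∨ (bstep S U \ U) ∩ S = ∅ := by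
  rw [bstep]
  split
  · -- stepB : difference is contained in S
    left
    ext x; simp only [Set.mem_inter_iff, Set.mem_empty_iff_false, iff_false, not_and,
      Set.mem_compl_iff, Set.mem_diff, stepB]
    rintro ⟨hx, hxU⟩ hxS
    rcases hx with hx | hx
    · exact hxU hx
    · simp only [Set.mem_iUnion] at hx
      obtain ⟨y, hy, hxy⟩ := hx
      have := (isoRad_spec hy.2.2) |>.2 ⟨hxy, hxU⟩
      rw [Set.mem_singleton_iff] at this
      exact hxS (this ▸ hy.1)
  · -- stepA : difference misses S
    right
    ext x; simp only [Set.mem_inter_iff, Set.mem_empty_iff_false, iff_false, not_and,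
      Set.mem_diff, stepA]
    rintro ⟨hx, hxU⟩ hxS
    rcases hx with hx | hx
    · exact hxU hx
    · exact hx (subset_closure ⟨hxS, hxU⟩)

lemma bstep_progress {S U : Set X} [CompleteSpace X] (hScnt : (closure S).Countable)
    (hU : IsOpen U) (hUne : U ≠ univ) : ∃ x, x ∈ bstep S U ∧ x ∉ U := by
  rw [bstep]
  split_ifs with hbranch
  · -- B branch : Uᶜ ⊆ closure (S \ U), find an isolated point
    have hFc : IsClosed (Uᶜ : Set X) := hU.isClosed_compl
    have hFsub : (Uᶜ : Set X) ⊆ closure (S \ U) := by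
      intro x hx
      by_contra hc
      exact hx (hbranch hc)
    have hFcnt : (Uᶜ : Set X).Countable :=
      (hScnt.mono (closure_mono Set.diff_subset)).mono hFsub
    have hFne : (Uᶜ : Set X).Nonempty := Set.nonempty_compl.mpr hUne
    have hiso : ∃ x ∈ (Uᶜ : Set X), ∃ r > 0, Metric.ball x r ∩ Uᶜ ⊆ {x} := by
      by_contra hno
      push_neg at hno
      have hperf : Perfect (Uᶜ : Set X) := by
        refine ⟨hFc, fun x hx => ?_⟩
        rw [accPt_iff_nhds]
        intro V hV
        obtain ⟨r, hr, hball⟩ := Metric.mem_nhds_iff.mp hV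
        have h5 := hno x hx r hr
        rw [Set.not_subset] at h5
        obtain ⟨y, ⟨hy1, hy2⟩, hy3⟩ := h5
        exact ⟨y, ⟨hball hy1, hy2⟩, by simpa using hy3⟩
      obtain ⟨f, hfr, _, hfi⟩ := hperf.exists_nat_bool_injection hFne
      have hcnt : Countable (ℕ → Bool) := by
        have h1 : Countable ↥(Uᶜ : Set X) := hFcnt.to_subtype
        exact Function.Injective.countable
          (f := fun b : (ℕ → Bool) => (⟨f b, hfr ⟨b, rfl⟩⟩ : ↥(Uᶜ : Set X)))
          (fun a b hab => hfi (congrArg Subtype.val hab))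
      have h2 : (Cardinal.mk (ℕ → Bool)) ≤ Cardinal.aleph0 := Cardinal.mk_le_aleph0
      rw [Cardinal.mk_arrow, Cardinal.mk_bool, Cardinal.mk_nat] at h2
      simp only [Cardinal.lift_id, Cardinal.lift_aleph0, Cardinal.lift_ofNat] at h2
      have h3 : Cardinal.aleph0 < (2 : Cardinal) ^ Cardinal.aleph0 := by
        have := Cardinal.cantor Cardinal.aleph0
        simpa using this
      exact absurd h2 (not_le.mpr h3)
    obtain ⟨x, hxF, r, hr, hball⟩ := hiso
    have hxS : x ∈ S \ U := by
      have hc := hFsub hxF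
      rw [mem_closure_iff] at hc
      obtain ⟨y, hy1, hy2⟩ := hc (Metric.ball x r) Metric.isOpen_ball (Metric.mem_ball_self hr)
      have hyx : y = x := by
        have := hball ⟨hy1, fun hyU => hy2.2 hyU⟩
        simpa using this
      exact hyx ▸ hy2
    have hmem : x ∈ isoPts S U := ⟨hxS.1, hxS.2, r, hr, hball⟩
    refine ⟨x, Or.inr ?_, hxF⟩
    simp only [Set.mem_iUnion]
    exact ⟨x, hmem, Metric.mem_ball_self (isoRad_spec ⟨r, hr, hball⟩).1⟩
  · -- A branch
    rw [Set.not_subset] at hbranch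
    obtain ⟨x, hx1, hx2⟩ := hbranch
    exact ⟨x, Or.inr hx1, hx2⟩


def bseq (S : Set X) (α : Ordinal) : Set X :=
  Ordinal.limitRecOn α ∅ (fun _ ih => bstep S ih)
    (fun o _ ih => ⋃ β, ⋃ h : β < o, ih β h)

lemma bseq_zero (S : Set X) : bseq S 0 = ∅ := Ordinal.limitRecOn_zero _ _ _

lemma bseq_succ (S : Set X) (α : Ordinal) : bseq S (α + 1) = bstep S (bseq S α) := by
  rw [bseq, Ordinal.add_one_eq_succ, Ordinal.limitRecOn_succ]
  rfl

lemma bseq_limit (S : Set X) {α : Ordinal} (h : Order.IsSuccLimit α) :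
    bseq S α = ⋃ β, ⋃ _ : β < α, bseq S β := by
  rw [bseq, Ordinal.limitRecOn_limit _ _ _ _ h]
  rfl

lemma bseq_isOpen (S : Set X) : ∀ α, IsOpen (bseq S α) := by
  intro α
  induction α using Ordinal.induction with
  | h α IH =>
    rcases Ordinal.zero_or_succ_or_isSuccLimit α with h0 | ⟨γ, hγ⟩ | hlim
    · rw [h0, bseq_zero]; exact isOpen_empty
    · rw [← Ordinal.add_one_eq_succ] at hγ
      subst hγ
      rw [bseq_succ]
      exact bstep_isOpen (IH γ (by rw [Ordinal.add_one_eq_succ]; exact Order.lt_succ γ))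
    · rw [bseq_limit S hlim]
      exact isOpen_iUnion fun β => isOpen_iUnion fun _ => IH β ‹β < α›

lemma bseq_mono (S : Set X) : ∀ {α γ : Ordinal}, α ≤ γ → bseq S α ⊆ bseq S γ := by
  intro α γ
  induction γ using Ordinal.induction with
  | h γ IH =>
    intro hαγ
    rcases eq_or_lt_of_le hαγ with rfl | hlt
    · exact subset_rfl
    rcases Ordinal.zero_or_succ_or_isSuccLimit γ with h0 | ⟨δ, hδ⟩ | hlim
    · exact absurd (h0 ▸ hlt) not_lt_zero
    · rw [← Ordinal.add_one_eq_succ] at hδ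
      subst hδ
      have hδlt : δ < δ + 1 := by rw [Ordinal.add_one_eq_succ]; exact Order.lt_succ δ
      have hαδ : α ≤ δ := by
        rw [Ordinal.add_one_eq_succ, Order.lt_succ_iff] at hlt
        exact hlt
      rw [bseq_succ]
      exact (IH δ hδlt hαδ).trans (subset_bstep S (bseq S δ))
    · rw [bseq_limit S hlim]
      exact Set.subset_iUnion_of_subset α (Set.subset_iUnion_of_subset hlt subset_rfl)

lemma compl_closure_subset_bseq (S : Set X) (hcl : closure S ≠ univ) {α : Ordinal}
    (hα : 1 ≤ α) : (closure S)ᶜ ⊆ bseq S α := by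
  have h1 : (closure S)ᶜ ⊆ bseq S 1 := by
    have h0 : bseq S 1 = bstep S ∅ := by
      have := bseq_succ S 0
      rwa [zero_add, bseq_zero] at this
    rw [h0, bstep]
    have hbr : ¬((closure (S \ ∅))ᶜ ⊆ ∅) := by
      rw [Set.diff_empty]
      intro hc
      obtain ⟨x, hx⟩ := Set.nonempty_compl.mpr hcl
      exact hc hx
    rw [if_neg hbr, stepA, Set.diff_empty]
    exact Set.subset_union_right
  exact h1.trans (bseq_mono S hα)

theorem bseq_reaches_univ [CompleteSpace X] {S : Set X} (hScnt : (closure S).Countable)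
    (hXunc : ¬(univ : Set X).Countable) :
    ∃ β, β < (Cardinal.aleph 1).ord ∧ bseq S β = univ := by
  by_contra hcon
  push_neg at hcon
  have hcl : closure S ≠ univ := fun hc => hXunc (hc ▸ hScnt)
  have hlt1 : ∀ β : Ordinal, β < (Cardinal.aleph 1).ord → 1 + β < (Cardinal.aleph 1).ord := by
    intro β hβ
    rw [Cardinal.lt_ord] at hβ ⊢
    rw [Ordinal.card_add, Ordinal.card_one]
    have hβ0 : β.card ≤ Cardinal.aleph0 := by
      rwa [← Cardinal.succ_aleph0, Order.lt_succ_iff] at hβ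
    calc 1 + β.card ≤ Cardinal.aleph0 :=
          Cardinal.add_le_aleph0.mpr ⟨Cardinal.one_lt_aleph0.le, hβ0⟩
      _ < Cardinal.aleph 1 := Cardinal.aleph0_lt_aleph_one
  have hprog : ∀ β : Ordinal, ∃ x, β < (Cardinal.aleph 1).ord →
      x ∈ bseq S (1 + β + 1) ∧ x ∉ bseq S (1 + β) := by
    intro β
    by_cases hβ : β < (Cardinal.aleph 1).ord
    · obtain ⟨x, hx1, hx2⟩ := bstep_progress hScnt (bseq_isOpen S (1 + β))
        (hcon (1 + β) (hlt1 β hβ))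
      exact ⟨x, fun _ => ⟨by rw [bseq_succ]; exact hx1, hx2⟩⟩
    · obtain ⟨x⟩ : Nonempty X := ⟨Classical.choice (by
        by_contra hne
        exact hXunc (by
          have : (univ : Set X) = ∅ := by
            ext y; exact absurd ⟨y⟩ hne
          rw [this]; exact Set.countable_empty))⟩
      exact ⟨x, fun hc => absurd hc hβ⟩
  choose pt hpt using hprog
  have hpt1 : ∀ β : Ordinal, β < (Cardinal.aleph 1).ord → pt β ∈ bseq S (1 + β + 1) :=
    fun β hβ => (hpt β hβ).1
  have hpt2 : ∀ β : Ordinal, β < (Cardinal.aleph 1).ord → pt β ∉ bseq S (1 + β) :=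
    fun β hβ => (hpt β hβ).2
  have hptS : ∀ β : Ordinal, β < (Cardinal.aleph 1).ord → pt β ∈ closure S := by
    intro β hβ
    by_contra hc
    exact hpt2 β hβ (compl_closure_subset_bseq S hcl le_self_add hc)
  have hinj : ∀ β γ, β < (Cardinal.aleph 1).ord → γ < (Cardinal.aleph 1).ord → β < γ →
      pt β ≠ pt γ := by
    intro β γ hβ hγ hlt heq
    have hle : 1 + β + 1 ≤ 1 + γ := by
      rw [add_assoc]
      exact add_le_add_right (by rwa [Ordinal.add_one_eq_succ, Order.succ_le_iff]) 1
    exact hpt2 γ hγ (heq ▸ bseq_mono S hle (hpt1 β hβ))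
  -- cardinality contradiction
  have hK : Countable ↥(closure S) := hScnt.to_subtype
  have hF : Function.Injective (fun b : ↥(Set.Iio ((Cardinal.aleph 1).ord)) =>
      (⟨pt b.1, hptS b.1 b.2⟩ : ↥(closure S))) := by
    intro a b hab
    by_contra hne
    have hne' : a.1 ≠ b.1 := fun hc => hne (Subtype.ext hc)
    have hval : pt a.1 = pt b.1 := congrArg Subtype.val hab
    rcases lt_or_gt_of_ne hne' with h1 | h1
    · exact hinj a.1 b.1 a.2 b.2 h1 hval
    · exact hinj b.1 a.1 b.2 a.2 h1 hval.symm
  have hcnt : Countable ↥(Set.Iio ((Cardinal.aleph 1).ord)) := hF.countable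
  have hcard : Cardinal.mk ↥(Set.Iio ((Cardinal.aleph 1).ord)) ≤ Cardinal.aleph0 :=
    Cardinal.mk_le_aleph0
  rw [Ordinal.mk_Iio_ordinal, Cardinal.card_ord, Cardinal.lift_le_aleph0] at hcard
  exact absurd hcard (not_le.mpr Cardinal.aleph0_lt_aleph_one)

theorem exists_bourgainSeq [CompleteSpace X] {S : Set X} (hScnt : (closure S).Countable)
    (hXunc : ¬(univ : Set X).Countable) :
    ∃ β, β < (Cardinal.aleph 1).ord ∧ ∃ G : Ordinal → Set X, IsBourgainSeq Sᶜ S β G := by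
  obtain ⟨β, hβ, huniv⟩ := bseq_reaches_univ hScnt hXunc
  refine ⟨β, hβ, bseq S, fun α _ => bseq_isOpen S α, fun α γ hαγ _ => bseq_mono S hαγ,
    fun α _ => by rw [bseq_succ]; exact bstep_step S (bseq S α),
    fun γ _ hγ => bseq_limit S hγ, bseq_zero S, huniv⟩

end UpperBound

section Config

variable {X : Type*} [MetricSpace X]

/-! ### surjective enumeration of smaller ordinals -/

lemma exists_surj_Iio {ξ : Ordinal} (h : 0 < ξ ∧ ξ < (Cardinal.aleph 1).ord) :
    ∃ f : ℕ → ↥(Set.Iio ξ), Function.Surjective f := by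
  have hcnt : Countable ↥(Set.Iio ξ) := by
    rw [← Cardinal.mk_le_aleph0_iff, Ordinal.mk_Iio_ordinal, Cardinal.lift_le_aleph0]
    have := h.2
    rw [Cardinal.lt_ord] at this
    rwa [← Cardinal.succ_aleph0, Order.lt_succ_iff] at this
  have hne : Nonempty ↥(Set.Iio ξ) := ⟨⟨0, h.1⟩⟩
  exact exists_surjective_nat _

def gseq (ξ : Ordinal) : ℕ → Ordinal :=
  if h : 0 < ξ ∧ ξ < (Cardinal.aleph 1).ord then fun k => ((exists_surj_Iio h).choose k).1
  else fun _ => 0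

lemma gseq_lt {ξ : Ordinal} (h0 : 0 < ξ) (k : ℕ) : gseq ξ k < ξ := by
  rw [gseq]
  split_ifs with h
  · exact ((exists_surj_Iio h).choose k).2
  · exact h0

lemma gseq_surj {ξ : Ordinal} (h0 : 0 < ξ) (hξ : ξ < (Cardinal.aleph 1).ord) {γ : Ordinal}
    (hγ : γ < ξ) : ∃ k, gseq ξ k = γ := by
  rw [gseq, dif_pos ⟨h0, hξ⟩]
  obtain ⟨k, hk⟩ := (exists_surj_Iio ⟨h0, hξ⟩).choose_spec ⟨γ, hγ⟩
  exact ⟨k, by rw [hk]⟩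

/-! ### choosing points from the dense sequence -/

def pickD (D : ℕ → X) (U : Set X) : X :=
  if h : (Set.range D ∩ U).Nonempty then h.choose else D 0

lemma pickD_spec {D : ℕ → X} {U : Set X} (h : (Set.range D ∩ U).Nonempty) :
    pickD D U ∈ Set.range D ∧ pickD D U ∈ U := by
  rw [pickD, dif_pos h]
  exact ⟨h.choose_spec.1, h.choose_spec.2⟩

lemma ball_diff_nonempty (hX : Perfect (Set.univ : Set X)) {D : ℕ → X} (hD : DenseRange D)
    (c : X) {r : ℝ} (hr : 0 < r) :
    (Set.range D ∩ (Metric.ball c r \ {c})).Nonempty := by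
  have hacc := hX.acc c (Set.mem_univ c)
  rw [accPt_iff_nhds] at hacc
  obtain ⟨y, ⟨hy1, _⟩, hy2⟩ := hacc (Metric.ball c r) (Metric.ball_mem_nhds c hr)
  have hop : IsOpen (Metric.ball c r \ {c}) := Metric.isOpen_ball.sdiff isClosed_singleton
  obtain ⟨p, hp⟩ := hD.exists_mem_open hop ⟨y, hy1, hy2⟩
  exact ⟨D p, ⟨p, rfl⟩, hp⟩

/-! ### the sequence of children centers -/

def ctr (D : ℕ → X) (c : X) (ε : ℝ) : ℕ → X
  | 0 => pickD D (Metric.ball c (ε / 3) \ {c})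
  | k + 1 => pickD D (Metric.ball c (dist (ctr D c ε k) c / 3) \ {c})

variable {D : ℕ → X}

lemma ctr_props (hX : Perfect (Set.univ : Set X)) (hD : DenseRange D) {c : X} {ε : ℝ}
    (hε : 0 < ε) : ∀ k, ctr D c ε k ∈ Set.range D ∧ 0 < dist (ctr D c ε k) c ∧
      dist (ctr D c ε k) c < ε / 3 ∧
      (∀ j, j < k → dist (ctr D c ε k) c < dist (ctr D c ε j) c / 3) := by
  intro k
  induction k with
  | zero =>
    obtain ⟨h1, h2⟩ := pickD_spec (ball_diff_nonempty hX hD c (by linarith : 0 < ε / 3))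
    refine ⟨h1, ?_, ?_, fun j hj => absurd hj (Nat.not_lt_zero j)⟩
    · rw [dist_pos]; exact fun hc => h2.2 hc
    · rw [← Metric.mem_ball]; exact h2.1
  | succ k ih =>
    obtain ⟨ih1, ih2, ih3, ih4⟩ := ih
    obtain ⟨h1, h2⟩ := pickD_spec (ball_diff_nonempty hX hD c (by linarith : 0 < dist (ctr D c ε k) c / 3))
    have hd : dist (ctr D c ε (k+1)) c < dist (ctr D c ε k) c / 3 := by
      rw [← Metric.mem_ball]
      exact (by exact h2.1 : ctr D c ε (k+1) ∈ Metric.ball c (dist (ctr D c ε k) c / 3))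
    refine ⟨h1, ?_, by linarith, ?_⟩
    · rw [dist_pos]; exact fun hc => h2.2 hc
    · intro j hj
      rcases Nat.lt_succ_iff_lt_or_eq.mp hj with hj' | rfl
      · have := ih4 j hj'
        linarith
      · exact hd

lemma ctr_decay (hX : Perfect (Set.univ : Set X)) (hD : DenseRange D) {c : X} {ε : ℝ}
    (hε : 0 < ε) : ∀ k, dist (ctr D c ε k) c < ε / 3 / 3 ^ k := by
  intro k
  induction k with
  | zero => simpa using (ctr_props hX hD hε 0).2.2.1
  | succ k ih =>
    have h1 := (ctr_props hX hD hε (c := c) (k+1)).2.2.2 k (Nat.lt_succ_self k)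
    have h3 : (0:ℝ) < 3 ^ k := by positivity
    calc dist (ctr D c ε (k+1)) c < dist (ctr D c ε k) c / 3 := h1
      _ < ε / 3 / 3 ^ k / 3 := by linarith
      _ = ε / 3 / 3 ^ (k+1) := by rw [pow_succ]; ring

/-! ### the transfinite configuration -/

def chT (ξ : Ordinal) (k : ℕ) : Ordinal := gseq ξ (Nat.unpair k).1

def chB (k : ℕ) : Bool := decide ((Nat.unpair k).2 % 2 = 0)

def chE (D : ℕ → X) (c : X) (ε : ℝ) (k : ℕ) : ℝ := dist (ctr D c ε k) c / 3

def config (D : ℕ → X) : Ordinal → Bool → X → ℝ → Set X × Set X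
  | ξ, l, c, ε =>
    if h : ξ = 0 then ({c}, if l then {c} else ∅)
    else
      ({c} ∪ ⋃ k : ℕ, (config D (chT ξ k) (chB k) (ctr D c ε k) (chE D c ε k)).1,
       (if l then {c} else ∅) ∪
         ⋃ k : ℕ, (config D (chT ξ k) (chB k) (ctr D c ε k) (chE D c ε k)).2)
  termination_by ξ _ _ _ => ξ
  decreasing_by all_goals (unfold chT; exact gseq_lt (pos_iff_ne_zero.mpr h) _)

lemma config_zero (D : ℕ → X) (l : Bool) (c : X) (ε : ℝ) :
    config D 0 l c ε = ({c}, if l then {c} else ∅) := by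
  rw [config]
  simp

lemma config_pos (D : ℕ → X) {ξ : Ordinal} (h : ξ ≠ 0) (l : Bool) (c : X) (ε : ℝ) :
    config D ξ l c ε =
      ({c} ∪ ⋃ k : ℕ, (config D (chT ξ k) (chB k) (ctr D c ε k) (chE D c ε k)).1,
       (if l then {c} else ∅) ∪
         ⋃ k : ℕ, (config D (chT ξ k) (chB k) (ctr D c ε k) (chE D c ε k)).2) := by
  rw [config]
  simp [h]


section ConfigProps

theorem config_basic (hX : Perfect (Set.univ : Set X)) (hD : DenseRange D) :
    ∀ ξ : Ordinal, ∀ (l : Bool) (c : X) (ε : ℝ), 0 < ε → c ∈ Set.range D →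
      c ∈ (config D ξ l c ε).1 ∧
      (config D ξ l c ε).2 ⊆ (config D ξ l c ε).1 ∧
      (config D ξ l c ε).1 ⊆ Set.range D ∧
      (config D ξ l c ε).1 ⊆ Metric.closedBall c (ε / 2) ∧
      ((c ∈ (config D ξ l c ε).2) ↔ l = true) ∧
      IsClosed (config D ξ l c ε).1 := by
  intro ξ
  induction ξ using Ordinal.induction with
  | h ξ IH =>
    intro l c ε hε hc
    by_cases h0 : ξ = 0
    · subst h0
      rw [config_zero]
      refine ⟨rfl, ?_, ?_, ?_, ?_, isClosed_singleton⟩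
      · cases l <;> simp
      · simpa using hc
      · intro x hx
        rw [Set.mem_singleton_iff] at hx
        subst hx
        exact Metric.mem_closedBall_self (by linarith)
      · cases l <;> simp
    · rw [config_pos D h0]
      have hd := fun k => ctr_props hX hD hε (c := c) k
      have hEpos : ∀ k, 0 < chE D c ε k := by
        intro k
        have := (hd k).2.1
        unfold chE
        linarith
      have hIH := fun k => IH (chT ξ k) (gseq_lt (pos_iff_ne_zero.mpr h0) _)
        (chB k) (ctr D c ε k) (chE D c ε k) (hEpos k) (hd k).1
      have hcball : ∀ k, (config D (chT ξ k) (chB k) (ctr D c ε k) (chE D c ε k)).1 ⊆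
          Metric.closedBall (ctr D c ε k) (dist (ctr D c ε k) c / 6) := by
        intro k y hy
        have h1 := (hIH k).2.2.2.1 hy
        rw [Metric.mem_closedBall] at h1 ⊢
        have h2 : chE D c ε k / 2 = dist (ctr D c ε k) c / 6 := by unfold chE; ring
        linarith [h2 ▸ h1]
      have hnotc : ∀ k, c ∉ (config D (chT ξ k) (chB k) (ctr D c ε k) (chE D c ε k)).1 := by
        intro k hk
        have h1 := hcball k hk
        rw [Metric.mem_closedBall, dist_comm] at h1
        have h2 := (hd k).2.1
        linarith
      refine ⟨Or.inl rfl, ?_, ?_, ?_, ?_, ?_⟩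
      · apply Set.union_subset_union
        · cases l <;> simp
        · exact Set.iUnion_mono fun k => (hIH k).2.1
      · apply Set.union_subset
        · simpa using hc
        · exact Set.iUnion_subset fun k => (hIH k).2.2.1
      · apply Set.union_subset
        · intro y hy
          rw [Set.mem_singleton_iff] at hy
          subst hy
          exact Metric.mem_closedBall_self (by linarith)
        · apply Set.iUnion_subset
          intro k y hy
          have h1 := hcball k hy
          rw [Metric.mem_closedBall] at h1 ⊢
          have h2 : dist y c ≤ dist y (ctr D c ε k) + dist (ctr D c ε k) c :=
            dist_triangle _ _ _
          have h3 := (hd k).2.2.1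
          have h4 := (hd k).2.1
          linarith
      · constructor
        · rintro (hcs | hcs)
          · cases l with
            | true => rfl
            | false => simp at hcs
          · rw [Set.mem_iUnion] at hcs
            obtain ⟨k, hk⟩ := hcs
            exact absurd ((hIH k).2.1 hk) (hnotc k)
        · intro hl
          subst hl
          exact Or.inl (by simp)
      · rw [← isOpen_compl_iff, isOpen_iff_forall_mem_open]
        intro x hx
        have hxc : x ≠ c := by
          intro hxy
          exact hx (Or.inl (by rw [hxy]; rfl))
        have hδ : 0 < dist x c := dist_pos.mpr hxc
        obtain ⟨N, hN⟩ : ∃ N : ℕ, (7/6) * (ε/3/3^N) < dist x c / 2 := by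
          obtain ⟨N, hN⟩ := pow_unbounded_of_one_lt ((7/6) * (ε/3) / (dist x c / 2))
            (by norm_num : (1:ℝ) < 3)
          rw [div_lt_iff₀ (by positivity : (0:ℝ) < dist x c / 2)] at hN
          refine ⟨N, ?_⟩
          have h3 : (0:ℝ) < 3 ^ N := by positivity
          rw [show (7:ℝ)/6 * (ε/3/3^N) = (7/6)*(ε/3)/3^N by ring, div_lt_iff₀ h3]
          linarith [hN]
        refine ⟨Metric.ball x (dist x c / 2) ∩ ⋂ k ∈ Finset.range N,
          ((config D (chT ξ k) (chB k) (ctr D c ε k) (chE D c ε k)).1)ᶜ, ?_, ?_, ?_⟩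
        · rintro y ⟨hy1, hy2⟩ hyK
          rw [Metric.mem_ball] at hy1
          have hyc : dist x c ≤ dist x y + dist y c := dist_triangle _ _ _
          have hxy := dist_comm x y
          have hyc2 : dist x c / 2 < dist y c := by linarith
          rcases hyK with hy | hy
          · rw [Set.mem_singleton_iff] at hy
            subst hy
            rw [dist_self] at hyc2
            linarith
          · rw [Set.mem_iUnion] at hy
            obtain ⟨k, hyk⟩ := hy
            by_cases hk : k < N
            · exact (Set.mem_iInter₂.mp hy2 k (Finset.mem_range.mpr hk)) hyk
            · push_neg at hk
              have h1 := hcball k hyk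
              rw [Metric.mem_closedBall] at h1
              have h2 : dist y c ≤ dist y (ctr D c ε k) + dist (ctr D c ε k) c :=
                dist_triangle _ _ _
              have h3 := ctr_decay hX hD hε (c := c) k
              have h4 : (3:ℝ)^N ≤ 3^k := pow_le_pow_right₀ (by norm_num) hk
              have h5 : ε/3/3^k ≤ ε/3/3^N :=
                div_le_div_of_nonneg_left (by positivity) (by positivity) h4
              have h6 := (hd k).2.1
              linarith
        · exact Metric.isOpen_ball.inter
            (isOpen_biInter_finset fun k _ => (hIH k).2.2.2.2.2.isOpen_compl)
        · refine ⟨Metric.mem_ball_self (by linarith), Set.mem_iInter₂.mpr fun k _ => ?_⟩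
          exact fun hc' => hx (Or.inr (Set.mem_iUnion.mpr ⟨k, hc'⟩))


lemma config_child_disjoint (hX : Perfect (Set.univ : Set X)) (hD : DenseRange D)
    {ξ : Ordinal} {c : X} {ε : ℝ} (hε : 0 < ε) (hc : c ∈ Set.range D) {k j : ℕ} (hkj : k < j) :
    (config D (chT ξ k) (chB k) (ctr D c ε k) (chE D c ε k)).1 ∩
      (config D (chT ξ j) (chB j) (ctr D c ε j) (chE D c ε j)).1 = ∅ := by
  have hd := fun k => ctr_props hX hD hε (c := c) k
  have hEpos : ∀ k, 0 < chE D c ε k := by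
    intro k
    have := (hd k).2.1
    unfold chE
    linarith
  have hcball : ∀ k, (config D (chT ξ k) (chB k) (ctr D c ε k) (chE D c ε k)).1 ⊆
      Metric.closedBall (ctr D c ε k) (dist (ctr D c ε k) c / 6) := by
    intro k y hy
    have h1 := (config_basic hX hD (chT ξ k) (chB k) (ctr D c ε k) (chE D c ε k)
      (hEpos k) (hd k).1).2.2.2.1 hy
    rw [Metric.mem_closedBall] at h1 ⊢
    have h2 : chE D c ε k / 2 = dist (ctr D c ε k) c / 6 := by unfold chE; ring
    linarith [h2 ▸ h1]
  ext y
  simp only [Set.mem_inter_iff, Set.mem_empty_iff_false, iff_false, not_and]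
  intro hyk hyj
  have h1 := hcball k hyk
  have h2 := hcball j hyj
  rw [Metric.mem_closedBall] at h1 h2
  have h3 : dist (ctr D c ε j) c < dist (ctr D c ε k) c / 3 := (hd j).2.2.2 k hkj
  have h4 : dist (ctr D c ε k) c ≤ dist (ctr D c ε k) (ctr D c ε j) + dist (ctr D c ε j) c :=
    dist_triangle _ _ _
  have h5 : dist (ctr D c ε k) (ctr D c ε j) ≤
      dist (ctr D c ε k) y + dist y (ctr D c ε j) := dist_triangle _ _ _
  have h6 := dist_comm (ctr D c ε k) y
  have h7 := (hd k).2.1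
  linarith

lemma config_child_notmem (hX : Perfect (Set.univ : Set X)) (hD : DenseRange D)
    {ξ : Ordinal} {c : X} {ε : ℝ} (hε : 0 < ε) (hc : c ∈ Set.range D) (k : ℕ) :
    c ∉ (config D (chT ξ k) (chB k) (ctr D c ε k) (chE D c ε k)).1 := by
  intro hk
  have hd := ctr_props hX hD hε (c := c) k
  have hEpos : 0 < chE D c ε k := by
    have := hd.2.1
    unfold chE
    linarith
  have h1 := (config_basic hX hD (chT ξ k) (chB k) (ctr D c ε k) (chE D c ε k)
    hEpos hd.1).2.2.2.1 hk
  rw [Metric.mem_closedBall, dist_comm] at h1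
  have h2 := hd.2.1
  have h3 : chE D c ε k / 2 = dist (ctr D c ε k) c / 6 := by unfold chE; ring
  rw [h3] at h1
  linarith

/-- membership in the global label set restricted to a child agrees with the child's label
set. -/
lemma config_child_transfer (hX : Perfect (Set.univ : Set X)) (hD : DenseRange D)
    {ξ : Ordinal} (h0 : ξ ≠ 0) (l : Bool) {c : X} {ε : ℝ} (hε : 0 < ε) (hc : c ∈ Set.range D)
    (k : ℕ) {x : X} (hx : x ∈ (config D (chT ξ k) (chB k) (ctr D c ε k) (chE D c ε k)).1) :
    x ∈ (config D ξ l c ε).2 ↔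
      x ∈ (config D (chT ξ k) (chB k) (ctr D c ε k) (chE D c ε k)).2 := by
  have hd := fun k => ctr_props hX hD hε (c := c) k
  have hEpos : ∀ k, 0 < chE D c ε k := by
    intro k
    have := (hd k).2.1
    unfold chE
    linarith
  rw [config_pos D h0]
  constructor
  · rintro (h | h)
    · exfalso
      cases l with
      | true =>
        rw [if_pos rfl, Set.mem_singleton_iff] at h
        subst h
        exact config_child_notmem hX hD hε hc k hx
      | false => simp at h
    · rw [Set.mem_iUnion] at h
      obtain ⟨j, hj⟩ := h
      rcases Nat.lt_trichotomy j k with hjk | rfl | hjk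
      · exfalso
        have hxj : x ∈ (config D (chT ξ j) (chB j) (ctr D c ε j) (chE D c ε j)).1 :=
          (config_basic hX hD (chT ξ j) (chB j) (ctr D c ε j) (chE D c ε j)
            (hEpos j) ((hd j).1)).2.1 hj
        have hdis := config_child_disjoint hX hD hε hc hjk (ξ := ξ)
        have hmem : x ∈ (∅ : Set X) := hdis ▸ Set.mem_inter hxj hx
        simp at hmem
      · exact hj
      · exfalso
        have hxj : x ∈ (config D (chT ξ j) (chB j) (ctr D c ε j) (chE D c ε j)).1 :=
          (config_basic hX hD (chT ξ j) (chB j) (ctr D c ε j) (chE D c ε j)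
            (hEpos j) ((hd j).1)).2.1 hj
        have hdis := config_child_disjoint hX hD hε hc hjk (ξ := ξ)
        have hmem : x ∈ (∅ : Set X) := hdis ▸ Set.mem_inter hx hxj
        simp at hmem
  · intro h
    exact Or.inr (Set.mem_iUnion.mpr ⟨k, h⟩)


theorem config_deep (hX : Perfect (Set.univ : Set X)) (hD : DenseRange D) :
    ∀ ξ : Ordinal, ξ < (Cardinal.aleph 1).ord → ∀ (l : Bool) (c : X) (ε : ℝ), 0 < ε →
      c ∈ Set.range D → ∀ St : Set X,
      (∀ x ∈ (config D ξ l c ε).1, (x ∈ St ↔ x ∈ (config D ξ l c ε).2)) →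
      ∀ γ, γ ≤ ξ → c ∈ dIter St γ := by
  intro ξ
  induction ξ using Ordinal.induction with
  | h ξ IH =>
    intro hξω l c ε hε hc St hSt γ
    induction γ using Ordinal.induction with
    | h γ IHγ =>
      intro hγξ
      rw [dIter_eq, Set.mem_iInter]
      intro γ'
      rw [Set.mem_iInter]
      intro hγ'γ
      have hγ'ξ : γ' < ξ := lt_of_lt_of_le hγ'γ hγξ
      have hξ0 : 0 < ξ := lt_of_le_of_lt zero_le hγ'ξ
      have hξ0' : ξ ≠ 0 := pos_iff_ne_zero.mp hξ0
      have hd := fun k => ctr_props hX hD hε (c := c) k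
      have hEpos : ∀ k, 0 < chE D c ε k := fun k => by
        have := (hd k).2.1; unfold chE; linarith
      have hcmem : c ∈ dIter St γ' := IHγ γ' hγ'γ (le_of_lt hγ'ξ)
      obtain ⟨i, hi⟩ := gseq_surj hξ0 hξω hγ'ξ
      have key : ∀ (b : Bool) (r : ℝ), 0 < r → ∃ k : ℕ, chT ξ k = γ' ∧ chB k = b ∧
          dist (ctr D c ε k) c < r := by
        intro b r hr
        obtain ⟨N, hN⟩ := pow_unbounded_of_one_lt (ε/3 / r) (by norm_num : (1:ℝ) < 3)
        set j := if b then 2*N else 2*N+1 with hj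
        have hjN : N ≤ j := by rw [hj]; split <;> omega
        refine ⟨Nat.pair i j, ?_, ?_, ?_⟩
        · unfold chT; rw [Nat.unpair_pair]; exact hi
        · unfold chB; rw [Nat.unpair_pair, hj]
          cases b with
          | true => simp [Nat.mul_mod_right]
          | false =>
            have h2 : (2*N+1) % 2 = 1 := by omega
            simp [h2]
        · have hkN : N ≤ Nat.pair i j := le_trans hjN (Nat.right_le_pair i j)
          have h1 := ctr_decay hX hD hε (c := c) (Nat.pair i j)
          have h4 : (3:ℝ)^N ≤ 3^(Nat.pair i j) := pow_le_pow_right₀ (by norm_num) hkN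
          have h5 : ε/3/3^(Nat.pair i j) ≤ ε/3/3^N :=
            div_le_div_of_nonneg_left (by positivity) (by positivity) h4
          rw [div_lt_iff₀ hr] at hN
          have h6 : ε/3/3^N < r := by
            rw [div_lt_iff₀ (by positivity : (0:ℝ) < 3^N)]
            linarith
          linarith
      have mkwit : ∀ (b : Bool) (o : Set X), IsOpen o → c ∈ o →
          ∃ y, y ∈ o ∧ y ∈ dIter St γ' ∧ (y ∈ St ↔ b = true) := by
        intro b o ho hco
        obtain ⟨r, hr, hball⟩ := Metric.isOpen_iff.mp ho c hco
        obtain ⟨k, hkT, hkB, hkd⟩ := key b r hr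
        have hchildK := config_basic hX hD (chT ξ k) (chB k) (ctr D c ε k) (chE D c ε k)
          (hEpos k) ((hd k).1)
        have hsubK : ∀ z, z ∈ (config D (chT ξ k) (chB k) (ctr D c ε k) (chE D c ε k)).1 →
            z ∈ (config D ξ l c ε).1 := by
          intro z hz
          rw [config_pos D hξ0']
          exact Or.inr (Set.mem_iUnion.mpr ⟨k, hz⟩)
        have hStk : ∀ x ∈ (config D (chT ξ k) (chB k) (ctr D c ε k) (chE D c ε k)).1,
            (x ∈ St ↔ x ∈ (config D (chT ξ k) (chB k) (ctr D c ε k) (chE D c ε k)).2) := by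
          intro x hxk
          exact (hSt x (hsubK x hxk)).trans (config_child_transfer hX hD hξ0' l hε hc k hxk)
        have hdeep := IH (chT ξ k) (gseq_lt hξ0 _)
          (by rw [hkT]; exact lt_trans hγ'ξ hξω) (chB k) (ctr D c ε k) (chE D c ε k)
          (hEpos k) ((hd k).1) St hStk γ' hkT.ge
        refine ⟨ctr D c ε k, hball (by rwa [Metric.mem_ball]), hdeep, ?_⟩
        rw [hStk _ hchildK.1, hchildK.2.2.2.2.1, hkB]
      refine ⟨⟨hcmem, ?_⟩, ?_⟩
      · rw [mem_closure_iff]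
        intro o ho hco
        obtain ⟨y, hy1, hy2, hy3⟩ := mkwit true o ho hco
        exact ⟨y, hy1, hy2, hy3.mpr rfl⟩
      · rw [mem_closure_iff]
        intro o ho hco
        obtain ⟨y, hy1, hy2, hy3⟩ := mkwit false o ho hco
        exact ⟨y, hy1, hy2, fun hyS => by simpa using hy3.mp hyS⟩

end ConfigProps

end Config

/-- On a nonempty perfect Polish space, for any fixed good basis and dense sequence, the
Bourgain ranks of the `{0,1}`-valued functions recoverable with respect to it are unbounded
below `ω₁`. -/
theorem bourgainRank_unbounded_on_recoverable {X : Type*} [TopologicalSpace X] [PolishSpace X]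
    [Nonempty X] (hX : Perfect (Set.univ : Set X))
    (W : ℕ → Set X) (hW : IsGoodBasis W) (D : ℕ → X) (hD : DenseRange D) :
    ∀ ξ < (Cardinal.aleph 1).ord, ∃ f : X → ℝ,
      (∀ x, f x = 0 ∨ f x = 1) ∧ RecoverableWith W D f ∧ ξ < rankLf f := by
  letI := TopologicalSpace.upgradeIsCompletelyMetrizable X
  intro ξ hξ
  have hc₀ : D 0 ∈ Set.range D := ⟨0, rfl⟩
  set K := (config D ξ true (D 0) 1).1 with hK
  set S := (config D ξ true (D 0) 1).2 with hS
  have hbasic := config_basic hX hD ξ true (D 0) 1 one_pos hc₀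
  have hSK : S ⊆ K := hbasic.2.1
  have hKD : K ⊆ Set.range D := hbasic.2.2.1
  have hKclosed : IsClosed K := hbasic.2.2.2.2.2
  have hclSK : closure S ⊆ K := closure_minimal hSK hKclosed
  have hclS : closure S ⊆ Set.range D := hclSK.trans hKD
  set f : X → ℝ := fun y => if y ∈ S then (1:ℝ) else 0 with hf
  have hvals : ∀ x, f x = 0 ∨ f x = 1 := by
    intro x
    by_cases hx : x ∈ S
    · right; simp [hf, hx]
    · left; simp [hf, hx]
  have hrec : RecoverableWith W D f := recoverableWith_indicator W D hW hD hclS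
  refine ⟨f, hvals, hrec, ?_⟩
  -- countability facts
  have hKcnt : K.Countable := (Set.countable_range D).mono hKD
  have hScnt' : (closure S).Countable := hKcnt.mono hclSK
  have hXunc : ¬(Set.univ : Set X).Countable := by
    intro hcnt
    obtain ⟨g, hgr, _, hgi⟩ := hX.exists_nat_bool_injection Set.univ_nonempty
    have hcnt2 : Countable (ℕ → Bool) := by
      have h1 : Countable ↥(Set.univ : Set X) := hcnt.to_subtype
      exact Function.Injective.countable
        (f := fun b : (ℕ → Bool) => (⟨g b, Set.mem_univ _⟩ : ↥(Set.univ : Set X)))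
        (fun a b hab => hgi (congrArg Subtype.val hab))
    have h2 : (Cardinal.mk (ℕ → Bool)) ≤ Cardinal.aleph0 := Cardinal.mk_le_aleph0
    rw [Cardinal.mk_arrow, Cardinal.mk_bool, Cardinal.mk_nat] at h2
    simp only [Cardinal.lift_id, Cardinal.lift_aleph0, Cardinal.lift_ofNat] at h2
    have h3 : Cardinal.aleph0 < (2 : Cardinal) ^ Cardinal.aleph0 := by
      have := Cardinal.cantor Cardinal.aleph0
      simpa using this
    exact absurd h2 (not_le.mpr h3)
  obtain ⟨β₀, hβ₀, G₀, hG₀⟩ := exists_bourgainSeq hScnt' hXunc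
  have hA : {x : X | f x ≤ ((0:ℚ):ℝ)} = Sᶜ := by
    ext x
    by_cases hx : x ∈ S <;> simp [hf, hx]
  have hB : {x : X | ((1:ℚ):ℝ) ≤ f x} = S := by
    ext x
    by_cases hx : x ∈ S <;> simp [hf, hx]
  have hrank : ξ < rankL Sᶜ S := by
    have hMne : {β : Ordinal | β < (Cardinal.aleph 1).ord ∧
        ∃ G : Ordinal → Set X, IsBourgainSeq Sᶜ S β G}.Nonempty := ⟨β₀, hβ₀, G₀, hG₀⟩
    have hmem := csInf_mem hMne
    rw [← rankL] at hmem
    obtain ⟨hlt, G, hG⟩ := hmem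
    by_contra hle
    push_neg at hle
    have hdeep := config_deep hX hD ξ hξ true (D 0) 1 one_pos hc₀ S
      (fun x _ => Iff.rfl) (rankL Sᶜ S) hle
    have hsub := dIter_subset_compl_bourgain hG (rankL Sᶜ S) le_rfl hdeep
    rw [hG.2.2.2.2.2] at hsub
    exact hsub (Set.mem_univ (D 0))
  have hle2 : rankL Sᶜ S ≤ rankLf f := by
    apply le_csSup
    · apply BddAbove.mono ?_ (Ordinal.bddAbove_range
        (fun q : ℚ × ℚ => rankL {x : X | f x ≤ (q.1:ℝ)} {x : X | (q.2:ℝ) ≤ f x}))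
      rintro o ⟨q₁, q₂, _, rfl⟩
      exact ⟨(q₁, q₂), rfl⟩
    · exact ⟨0, 1, by norm_num, by rw [hA, hB]⟩
  exact lt_of_lt_of_le hrank hle2
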